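/- The damage-dependent elasticity operator built from the von Mises projection is Lipschitz in both arguments: for η > 0, define B(ε, ζ) := η (ε − P_{K(ζ)} ε) for ε ∈ S^d and ζ ≥ 0. Then for all ε₁, ε₂ ∈ S^d and all ζ₁, ζ₂ ≥ 0, ‖B(ε₁, ζ₁) − B(ε₂, ζ₂)‖ ≤ η ‖ε₁ − ε₂‖ + η σ_Y |ζ₁ − ζ₂|; in particular, with L_B := η max(1, σ_Y), ‖B(ε₁, ζ₁) − B(ε₂, ζ₂)‖ ≤ L_B (‖ε₁ − ε₂‖ + |ζ₁ − ζ₂|). -/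

import Mathlib

open scoped RealInnerProductSpace

/-- The space of `d × d` real matrices equipped with the Frobenius inner product and norm,
modeled as `EuclideanSpace ℝ (Fin d × Fin d)`. -/
abbrev MatF (d : ℕ) : Type := EuclideanSpace ℝ (Fin d × Fin d)

/-- The trace of a matrix. -/
def MatF.trace {d : ℕ} (τ : MatF d) : ℝ := ∑ i : Fin d, τ (i, i)

/-- The identity matrix. -/
noncomputable def MatF.idm (d : ℕ) : MatF d :=
  (EuclideanSpace.equiv (Fin d × Fin d) ℝ).symm (fun p => if p.1 = p.2 then 1 else 0)

/-- A matrix is symmetric. -/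
def MatF.IsSymm {d : ℕ} (τ : MatF d) : Prop := ∀ i j : Fin d, τ (i, j) = τ (j, i)

/-- The deviatoric part `τ^D = τ − (tr τ / d) I` of a matrix. -/
noncomputable def MatF.dev {d : ℕ} (τ : MatF d) : MatF d :=
  τ - (MatF.trace τ / (d : ℝ)) • MatF.idm d

/-- The von Mises set `K(ζ) = {τ ∈ S^d : ‖τ^D‖ ≤ ζ σ_Y}`. -/
noncomputable def vonMises (d : ℕ) (σY ζ : ℝ) : Set (MatF d) :=
  {τ : MatF d | τ.IsSymm ∧ ‖τ.dev‖ ≤ ζ * σY}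

/-- `p` is the metric projection of `x` onto the set `K`: `p ∈ K` and `p` is closest to `x`. -/
def IsProjOn {d : ℕ} (K : Set (MatF d)) (x p : MatF d) : Prop :=
  p ∈ K ∧ ∀ q ∈ K, dist x p ≤ dist x q

/-! ### Auxiliary lemmas -/

namespace MatF
variable {d : ℕ}

lemma idm_apply (p : Fin d × Fin d) : MatF.idm d p = if p.1 = p.2 then 1 else 0 := rfl

lemma trace_sub' (σ τ : MatF d) : (σ - τ).trace = σ.trace - τ.trace := by
  simp [MatF.trace, Finset.sum_sub_distrib]

lemma trace_add' (σ τ : MatF d) : (σ + τ).trace = σ.trace + τ.trace := by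
  simp [MatF.trace, Finset.sum_add_distrib]

lemma trace_smul' (a : ℝ) (τ : MatF d) : (a • τ).trace = a * τ.trace := by
  simp [MatF.trace, Finset.mul_sum]

lemma trace_idm' : (MatF.idm d).trace = d := by
  simp [MatF.trace, idm_apply]

lemma inner_idm (τ : MatF d) : ⟪τ, MatF.idm d⟫ = τ.trace := by
  simp only [PiLp.inner_apply, RCLike.inner_apply, conj_trivial, idm_apply]
  rw [Fintype.sum_prod_type]
  simp [MatF.trace, mul_ite, Finset.sum_ite_eq']

lemma dev_sub (σ τ : MatF d) : (σ - τ).dev = σ.dev - τ.dev := by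
  simp only [MatF.dev, trace_sub', sub_div]
  module

lemma dev_add (σ τ : MatF d) : (σ + τ).dev = σ.dev + τ.dev := by
  simp only [MatF.dev, trace_add', add_div]
  module

lemma dev_smul (a : ℝ) (τ : MatF d) : (a • τ).dev = a • τ.dev := by
  simp only [MatF.dev, trace_smul', mul_div_assoc]
  module

lemma trace_dev (hd : d ≠ 0) (τ : MatF d) : τ.dev.trace = 0 := by
  have hdd : (d : ℝ) ≠ 0 := Nat.cast_ne_zero.mpr hd
  simp [MatF.dev, trace_sub', trace_smul', trace_idm', div_mul_cancel₀, hdd]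

lemma dev_dev (hd : d ≠ 0) (τ : MatF d) : τ.dev.dev = τ.dev := by
  nth_rewrite 1 [MatF.dev]
  simp [trace_dev hd]

lemma norm_dev_le (hd : d ≠ 0) (τ : MatF d) : ‖τ.dev‖ ≤ ‖τ‖ := by
  have hτ : τ = τ.dev + (τ.trace / (d:ℝ)) • MatF.idm d := by
    simp [MatF.dev]
  have hinner : ⟪τ.dev, (τ.trace / (d:ℝ)) • MatF.idm d⟫ = 0 := by
    rw [real_inner_smul_right, inner_idm, trace_dev hd, mul_zero]
  have h2 : ‖τ‖^2 = ‖τ.dev‖^2 + ‖(τ.trace / (d:ℝ)) • MatF.idm d‖^2 := by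
    nth_rewrite 1 [hτ]
    rw [norm_add_sq_real, hinner]; ring
  nlinarith [norm_nonneg τ, norm_nonneg τ.dev, sq_nonneg ‖(τ.trace / (d:ℝ)) • MatF.idm d‖]

lemma idm_isSymm : (MatF.idm d).IsSymm := by
  intro i j; simp only [idm_apply]; simp [eq_comm]

lemma IsSymm.dev {τ : MatF d} (h : τ.IsSymm) : τ.dev.IsSymm := by
  intro i j
  simp only [MatF.dev, PiLp.sub_apply, PiLp.smul_apply, h i j, idm_isSymm i j]

end MatF

lemma max_zero_one_sub (x : ℝ) : max 0 (1 - x) = 1 - min 1 x := by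
  rcases le_total x 1 with h | h
  · rw [min_eq_right h, max_eq_right (by linarith)]
  · rw [min_eq_left h, max_eq_left (by linarith)]; norm_num

section Key
variable {E : Type*} [NormedAddCommGroup E] [InnerProductSpace ℝ E]

lemma key_inner (c : ℝ) (hc : 0 ≤ c) (v w : E) :
    0 ≤ ⟪(max 0 (1 - c/‖v‖)) • v, (min 1 (c/‖v‖)) • v - (min 1 (c/‖w‖)) • w⟫ := by
  set t := max 0 (1 - c/‖v‖) with ht
  set s := min 1 (c/‖v‖) with hs
  set m := min 1 (c/‖w‖) with hm
  by_cases hvz : v = 0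
  · rw [hvz]; simp
  rcases eq_or_lt_of_le (le_max_left 0 (1 - c/‖v‖)) with h0 | h0
  · rw [← ht] at h0; rw [← h0]; simp
  · -- t > 0, so c < ‖v‖
    have hv0 : 0 < ‖v‖ := norm_pos_iff.mpr hvz
    have hvc : c / ‖v‖ < 1 := by
      rcases lt_max_iff.mp h0 with h | h
      · linarith
      · linarith
    have hsval : s = c / ‖v‖ := min_eq_right hvc.le
    have hm0 : 0 ≤ m := le_min (by norm_num) (div_nonneg hc (norm_nonneg w))
    have hmw : m * ‖w‖ ≤ c := by
      rcases eq_or_lt_of_le (norm_nonneg w) with hw | hw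
      · rw [← hw, mul_zero]; exact hc
      · calc m * ‖w‖ ≤ (c / ‖w‖) * ‖w‖ :=
              mul_le_mul_of_nonneg_right (min_le_right _ _) (norm_nonneg w)
          _ = c := div_mul_cancel₀ c hw.ne'
    have hiw : ⟪v, w⟫ ≤ ‖v‖ * ‖w‖ := real_inner_le_norm v w
    rw [inner_sub_right, real_inner_smul_left, real_inner_smul_left,
      real_inner_smul_right, real_inner_smul_right, real_inner_self_eq_norm_sq]
    have hsv : s * ‖v‖^2 = c * ‖v‖ := by
      rw [hsval]; field_simp
    have h1 : m * ⟪v, w⟫ ≤ c * ‖v‖ := by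
      calc m * ⟪v, w⟫ ≤ m * (‖v‖ * ‖w‖) := by
            rcases eq_or_lt_of_le hm0 with h | h
            · rw [← h]; simp
            · exact mul_le_mul_of_nonneg_left hiw hm0
        _ = (m * ‖w‖) * ‖v‖ := by ring
        _ ≤ c * ‖v‖ := mul_le_mul_of_nonneg_right hmw hv0.le
    nlinarith [h0.le]

lemma key_nonexpansive (c : ℝ) (hc : 0 ≤ c) (v w : E) :
    ‖(max 0 (1 - c/‖v‖)) • v - (max 0 (1 - c/‖w‖)) • w‖ ≤ ‖v - w‖ := by
  set gv := (max 0 (1 - c/‖v‖)) • v with hgv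
  set gw := (max 0 (1 - c/‖w‖)) • w with hgw
  set hv := (min 1 (c/‖v‖)) • v with hhv
  set hw := (min 1 (c/‖w‖)) • w with hhw
  have hsplitv : v = gv + hv := by
    rw [hgv, hhv, max_zero_one_sub, sub_smul, one_smul]; abel
  have hsplitw : w = gw + hw := by
    rw [hgw, hhw, max_zero_one_sub, sub_smul, one_smul]; abel
  have hinner : 0 ≤ ⟪gv - gw, hv - hw⟫ := by
    have h1 := key_inner c hc v w
    have h2 := key_inner c hc w v
    rw [← hgv, ← hhv, ← hhw] at h1
    rw [← hgw, ← hhw, ← hhv] at h2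
    have : ⟪gv - gw, hv - hw⟫ = ⟪gv, hv - hw⟫ + ⟪gw, hw - hv⟫ := by
      simp only [inner_sub_left, inner_sub_right]; ring
    rw [this]
    linarith
  have hdecomp : v - w = (gv - gw) + (hv - hw) := by
    nth_rewrite 1 [hsplitv, hsplitw]; abel
  have hsq : ‖v - w‖^2 = ‖gv - gw‖^2 + 2 * ⟪gv - gw, hv - hw⟫ + ‖hv - hw‖^2 := by
    rw [hdecomp, norm_add_sq_real]
  nlinarith [norm_nonneg (v - w), norm_nonneg (gv - gw), sq_nonneg ‖hv - hw‖]

lemma key_c_lipschitz (c₁ c₂ : ℝ) (v : E) :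
    ‖(max 0 (1 - c₁/‖v‖)) • v - (max 0 (1 - c₂/‖v‖)) • v‖ ≤ |c₁ - c₂| := by
  rw [← sub_smul, norm_smul, Real.norm_eq_abs]
  rcases eq_or_lt_of_le (norm_nonneg v) with hv | hv
  · rw [← hv, mul_zero]; exact abs_nonneg _
  · have h1 : |max 0 (1 - c₁/‖v‖) - max 0 (1 - c₂/‖v‖)| ≤ |(1 - c₁/‖v‖) - (1 - c₂/‖v‖)| := by
      rw [max_comm 0 (1 - c₁/‖v‖), max_comm 0 (1 - c₂/‖v‖)]
      exact abs_max_sub_max_le_abs _ _ 0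
    have h2 : |(1 - c₁/‖v‖) - (1 - c₂/‖v‖)| = |c₁ - c₂| / ‖v‖ := by
      rw [show (1 - c₁/‖v‖) - (1 - c₂/‖v‖) = (c₂ - c₁)/‖v‖ by field_simp; ring,
        abs_div, abs_of_pos hv, abs_sub_comm]
    calc |max 0 (1 - c₁/‖v‖) - max 0 (1 - c₂/‖v‖)| * ‖v‖
        ≤ (|c₁ - c₂| / ‖v‖) * ‖v‖ :=
          mul_le_mul_of_nonneg_right (h1.trans h2.le) (norm_nonneg v)
      _ = |c₁ - c₂| := div_mul_cancel₀ _ hv.ne'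
end Key

lemma proj_unique {d : ℕ} {K : Set (MatF d)}
    (hK : ∀ p q, p ∈ K → q ∈ K → (1/2 : ℝ) • (p + q) ∈ K)
    {x p q : MatF d} (hp : IsProjOn K x p) (hq : IsProjOn K x q) : p = q := by
  have h1 : dist x p = dist x q := le_antisymm (hp.2 q hq.1) (hq.2 p hp.1)
  have hm := hq.2 _ (hK p q hp.1 hq.1)
  have hpar := parallelogram_law_with_norm ℝ (x - p) (x - q)
  have he1 : (x - p) + (x - q) = (2:ℝ) • (x - (1/2 : ℝ) • (p + q)) := by module
  have he2 : (x - p) - (x - q) = q - p := by abel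
  rw [he1, he2, norm_smul] at hpar
  simp only [Real.norm_ofNat] at hpar
  rw [dist_eq_norm, dist_eq_norm] at hm h1
  have hz : ‖q - p‖^2 ≤ 0 := by
    nlinarith [norm_nonneg (x - (1/2 : ℝ) • (p + q)), norm_nonneg (x - q)]
  have h0 : ‖q - p‖ = 0 := le_antisymm (by nlinarith [norm_nonneg (q - p)]) (norm_nonneg _)
  exact (sub_eq_zero.mp (norm_eq_zero.mp h0)).symm

lemma vonMises_midpoint {d : ℕ} (σY ζ : ℝ) (p q : MatF d)
    (hp : p ∈ vonMises d σY ζ) (hq : q ∈ vonMises d σY ζ) :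
    (1/2 : ℝ) • (p + q) ∈ vonMises d σY ζ := by
  obtain ⟨hps, hpn⟩ := hp
  obtain ⟨hqs, hqn⟩ := hq
  constructor
  · intro i j
    simp only [PiLp.smul_apply, PiLp.add_apply, hps i j, hqs i j]
  · rw [MatF.dev_smul, MatF.dev_add, norm_smul, Real.norm_eq_abs]
    have := norm_add_le p.dev q.dev
    have h01 : |(1/2 : ℝ)| = 1/2 := by norm_num
    rw [h01]
    nlinarith [norm_add_le p.dev q.dev]

lemma vonMises_proj_formula {d : ℕ} (hd : d ≠ 0) {σY ζ : ℝ} (hσY : 0 < σY) (hζ : 0 ≤ ζ)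
    (ε : MatF d) (hε : ε.IsSymm) :
    IsProjOn (vonMises d σY ζ) ε (ε - (max 0 (1 - ζ * σY / ‖ε.dev‖)) • ε.dev) := by
  set c := ζ * σY with hc
  have hc0 : 0 ≤ c := mul_nonneg hζ hσY.le
  set r := ‖ε.dev‖ with hr
  have hr0 : 0 ≤ r := norm_nonneg _
  set t := max 0 (1 - c / r) with htdef
  have ht0 : 0 ≤ t := le_max_left _ _
  have ht1 : t ≤ 1 := by
    rw [htdef]
    apply max_le (by norm_num)
    have : 0 ≤ c / r := div_nonneg hc0 hr0
    linarith
  have hdevp : (ε - t • ε.dev).dev = (1 - t) • ε.dev := by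
    rw [MatF.dev_sub, MatF.dev_smul, MatF.dev_dev hd, sub_smul, one_smul]
  have hdist : ‖ε - (ε - t • ε.dev)‖ = max 0 (r - c) := by
    rw [show ε - (ε - t • ε.dev) = t • ε.dev by abel, norm_smul, Real.norm_eq_abs,
      abs_of_nonneg ht0, ← hr]
    rcases eq_or_lt_of_le hr0 with h | h
    · rw [← h, mul_zero]
      rw [max_eq_left (by linarith)]
    · rw [htdef, max_zero_one_sub]
      rcases le_total (c / r) 1 with hcr | hcr
      · rw [min_eq_right hcr]
        rw [max_eq_right (by nlinarith [(div_le_one h).mp hcr])]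
        field_simp
      · rw [min_eq_left hcr]
        rw [max_eq_left (by nlinarith [(one_le_div h).mp hcr])]
        simp
  constructor
  · constructor
    · intro i j
      simp only [PiLp.sub_apply, PiLp.smul_apply, hε i j, hε.dev i j]
    · rw [hdevp, norm_smul, Real.norm_eq_abs, abs_of_nonneg (by linarith), ← hr]
      rcases eq_or_lt_of_le hr0 with h0 | h0
      · rw [← h0, mul_zero]; exact hc0
      rcases le_total r c with h | h
      · -- t = 0
        have htz : t = 0 := by
          rw [htdef, max_eq_left]
          have : 1 ≤ c / r := (one_le_div h0).mpr h
          linarith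
        rw [htz]; simpa using h
      · -- r ≥ c, (1-t) r = c
        have hts : 1 - t = c / r := by
          rw [htdef, max_zero_one_sub, min_eq_right ((div_le_one h0).mpr h)]
          simp
        rw [hts, div_mul_cancel₀ _ h0.ne']
  · intro q hq
    obtain ⟨hqs, hqn⟩ := hq
    rw [dist_eq_norm, dist_eq_norm, hdist]
    apply max_le
    · exact norm_nonneg _
    · calc r - c ≤ ‖(ε - q).dev‖ := by
            rw [MatF.dev_sub]
            have := norm_sub_norm_le ε.dev q.dev
            linarith
        _ ≤ ‖ε - q‖ := MatF.norm_dev_le hd _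

theorem elasticity_operator_lipschitz (d : ℕ) (hd : 1 ≤ d) (σY : ℝ) (hσY : 0 < σY)
    (η : ℝ) (hη : 0 < η) (ε₁ ε₂ : MatF d) (hε₁ : ε₁.IsSymm) (hε₂ : ε₂.IsSymm)
    (ζ₁ ζ₂ : ℝ) (hζ₁ : 0 ≤ ζ₁) (hζ₂ : 0 ≤ ζ₂) (p₁ p₂ : MatF d)
    (hp₁ : IsProjOn (vonMises d σY ζ₁) ε₁ p₁) (hp₂ : IsProjOn (vonMises d σY ζ₂) ε₂ p₂) :
    ‖η • (ε₁ - p₁) - η • (ε₂ - p₂)‖ ≤ η * ‖ε₁ - ε₂‖ + η * σY * |ζ₁ - ζ₂| ∧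
    ‖η • (ε₁ - p₁) - η • (ε₂ - p₂)‖ ≤ η * max 1 σY * (‖ε₁ - ε₂‖ + |ζ₁ - ζ₂|) := by
  have hd0 : d ≠ 0 := by omega
  set c₁ := ζ₁ * σY with hc₁
  set c₂ := ζ₂ * σY with hc₂
  have hpe₁ : p₁ = ε₁ - (max 0 (1 - c₁ / ‖ε₁.dev‖)) • ε₁.dev :=
    proj_unique (vonMises_midpoint σY ζ₁) hp₁ (vonMises_proj_formula hd0 hσY hζ₁ ε₁ hε₁)
  have hpe₂ : p₂ = ε₂ - (max 0 (1 - c₂ / ‖ε₂.dev‖)) • ε₂.dev :=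
    proj_unique (vonMises_midpoint σY ζ₂) hp₂ (vonMises_proj_formula hd0 hσY hζ₂ ε₂ hε₂)
  set v₁ := ε₁.dev with hv₁
  set v₂ := ε₂.dev with hv₂
  have he₁ : ε₁ - p₁ = (max 0 (1 - c₁ / ‖v₁‖)) • v₁ := by rw [hpe₁]; abel
  have he₂ : ε₂ - p₂ = (max 0 (1 - c₂ / ‖v₂‖)) • v₂ := by rw [hpe₂]; abel
  have hkey : ‖(ε₁ - p₁) - (ε₂ - p₂)‖ ≤ ‖ε₁ - ε₂‖ + σY * |ζ₁ - ζ₂| := by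
    rw [he₁, he₂]
    calc ‖(max 0 (1 - c₁ / ‖v₁‖)) • v₁ - (max 0 (1 - c₂ / ‖v₂‖)) • v₂‖
        ≤ ‖(max 0 (1 - c₁ / ‖v₁‖)) • v₁ - (max 0 (1 - c₁ / ‖v₂‖)) • v₂‖ +
          ‖(max 0 (1 - c₁ / ‖v₂‖)) • v₂ - (max 0 (1 - c₂ / ‖v₂‖)) • v₂‖ := by
          exact norm_sub_le_norm_sub_add_norm_sub _ _ _
      _ ≤ ‖v₁ - v₂‖ + |c₁ - c₂| := by
          gcongr
          · exact key_nonexpansive c₁ (mul_nonneg hζ₁ hσY.le) v₁ v₂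
          · exact key_c_lipschitz c₁ c₂ v₂
      _ ≤ ‖ε₁ - ε₂‖ + σY * |ζ₁ - ζ₂| := by
          gcongr
          · rw [hv₁, hv₂, ← MatF.dev_sub]
            exact MatF.norm_dev_le hd0 _
          · rw [hc₁, hc₂, show ζ₁ * σY - ζ₂ * σY = (ζ₁ - ζ₂) * σY by ring, abs_mul,
              abs_of_pos hσY]
            ring_nf
            exact le_refl _
  have hmain : ‖η • (ε₁ - p₁) - η • (ε₂ - p₂)‖ ≤ η * ‖ε₁ - ε₂‖ + η * σY * |ζ₁ - ζ₂| := by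
    rw [← smul_sub, norm_smul, Real.norm_eq_abs, abs_of_pos hη]
    nlinarith [hkey, hη.le]
  refine ⟨hmain, hmain.trans ?_⟩
  have h1 : ‖ε₁ - ε₂‖ ≤ max 1 σY * ‖ε₁ - ε₂‖ := by
    nlinarith [le_max_left 1 σY, norm_nonneg (ε₁ - ε₂)]
  have h2 : σY * |ζ₁ - ζ₂| ≤ max 1 σY * |ζ₁ - ζ₂| := by
    nlinarith [le_max_right 1 σY, abs_nonneg (ζ₁ - ζ₂)]
  nlinarith [hη.le]
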